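/- Cosine-coefficient equivariance error bound for the regular nonlinearity: for every δ with 0 ≤ δ ≤ 1 and every integer m ≥ 1, | (2/N) Σ_{t=0}^{N−1} cos(2π m t / N) · y(t + δ) − (2/N) Σ_{t=0}^{N−1} cos(2π m (t − δ) / N) · y(t) | ≤ (4π L_f / N) · ( ‖∂x‖₁ + m · ‖x‖₁ ). -/

import Mathlib

open Finset Real

/-- cos-coefficient equivariance error bound for the regular
nonlinearity. -/
theorem cosine_coefficient_equivariance_error_bound
    (N B : ℕ) (hN : 1 ≤ N) (hB : 1 ≤ B)
    (x0 : ℝ) (xa xb : ℕ → ℝ) (x : ℝ → ℝ)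
    (hx : ∀ t : ℝ, x t = x0 + ∑ m ∈ Finset.Icc 1 B,
      (xa m * Real.cos (2 * Real.pi * m * t / N)
        + xb m * Real.sin (2 * Real.pi * m * t / N)))
    (f : ℝ → ℝ) (Lf : ℝ) (hLf : 0 ≤ Lf)
    (hf : ∀ a b : ℝ, |f a - f b| ≤ Lf * |a - b|) (hf0 : f 0 = 0)
    (y : ℝ → ℝ) (hy : ∀ t : ℝ, y t = f (x t)) :
    ∀ (δ : ℝ), 0 ≤ δ → δ ≤ 1 → ∀ m : ℕ, 1 ≤ m →
      |(2 / (N : ℝ)) * (∑ t ∈ Finset.range N,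
            Real.cos (2 * Real.pi * m * t / N) * y ((t : ℝ) + δ))
        - (2 / (N : ℝ)) * (∑ t ∈ Finset.range N,
            Real.cos (2 * Real.pi * m * ((t : ℝ) - δ) / N) * y t)|
      ≤ (4 * Real.pi * Lf / N) *
          ((∑ k ∈ Finset.Icc 1 B, (k : ℝ) * (|xa k| + |xb k|))
            + (m : ℝ) * (|x0| + ∑ k ∈ Finset.Icc 1 B, (|xa k| + |xb k|))) := by
  intro δ hδ0 hδ1 m hm
  have hNpos : (0:ℝ) < N := by exact_mod_cast hN
  set S1 : ℝ := ∑ k ∈ Finset.Icc 1 B, (k : ℝ) * (|xa k| + |xb k|) with hS1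
  set S2 : ℝ := |x0| + ∑ k ∈ Finset.Icc 1 B, (|xa k| + |xb k|) with hS2
  have hS1nn : 0 ≤ S1 := Finset.sum_nonneg fun k _ => by positivity
  have hS2nn : 0 ≤ S2 :=
    add_nonneg (abs_nonneg _) (Finset.sum_nonneg fun k _ => by positivity)
  have habs2 : ∀ z : ℝ, |z / 2| = |z| / 2 := fun z => by
    rw [abs_div]; norm_num
  have hcos : ∀ a b : ℝ, |Real.cos a - Real.cos b| ≤ |a - b| := by
    intro a b
    rw [Real.cos_sub_cos, abs_mul, abs_mul,
      show |(-2:ℝ)| = 2 by norm_num]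
    have h1 := Real.abs_sin_le_one ((a + b) / 2)
    have h2 : |Real.sin ((a - b) / 2)| ≤ |a - b| / 2 := by
      simpa [habs2] using Real.abs_sin_le_abs (x := (a - b) / 2)
    nlinarith [abs_nonneg (Real.sin ((a - b) / 2)),
      abs_nonneg (Real.sin ((a + b) / 2)), abs_nonneg (a - b)]
  have hsin : ∀ a b : ℝ, |Real.sin a - Real.sin b| ≤ |a - b| := by
    intro a b
    rw [Real.sin_sub_sin, abs_mul, abs_mul,
      show |(2:ℝ)| = 2 by norm_num]
    have h1 := Real.abs_cos_le_one ((a + b) / 2)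
    have h2 : |Real.sin ((a - b) / 2)| ≤ |a - b| / 2 := by
      simpa [habs2] using Real.abs_sin_le_abs (x := (a - b) / 2)
    nlinarith [abs_nonneg (Real.sin ((a - b) / 2)),
      abs_nonneg (Real.cos ((a + b) / 2)), abs_nonneg (a - b)]
  -- bound on |x t|
  have hxabs : ∀ t : ℝ, |x t| ≤ S2 := by
    intro t
    rw [hx]
    refine (abs_add_le _ _).trans ?_
    rw [hS2]
    refine add_le_add le_rfl ((Finset.abs_sum_le_sum_abs _ _).trans
      (Finset.sum_le_sum fun k _ => (abs_add_le _ _).trans (add_le_add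
        (by rw [abs_mul]
            exact mul_le_of_le_one_right (abs_nonneg _) (Real.abs_cos_le_one _))
        (by rw [abs_mul]
            exact mul_le_of_le_one_right (abs_nonneg _) (Real.abs_sin_le_one _)))))
  -- bound on |x (t+δ) - x t|
  have hxdiff : ∀ t : ℝ, |x (t + δ) - x t| ≤ 2 * Real.pi / N * S1 := by
    intro t
    rw [hx, hx]
    have heq : (x0 + ∑ k ∈ Finset.Icc 1 B,
        (xa k * Real.cos (2 * Real.pi * k * (t + δ) / N)
          + xb k * Real.sin (2 * Real.pi * k * (t + δ) / N)))
        - (x0 + ∑ k ∈ Finset.Icc 1 B,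
        (xa k * Real.cos (2 * Real.pi * k * t / N)
          + xb k * Real.sin (2 * Real.pi * k * t / N)))
        = ∑ k ∈ Finset.Icc 1 B,
          (xa k * (Real.cos (2 * Real.pi * k * (t + δ) / N)
              - Real.cos (2 * Real.pi * k * t / N))
            + xb k * (Real.sin (2 * Real.pi * k * (t + δ) / N)
              - Real.sin (2 * Real.pi * k * t / N))) := by
      rw [add_sub_add_left_eq_sub, ← Finset.sum_sub_distrib]
      exact Finset.sum_congr rfl fun k _ => by ring
    rw [heq]
    refine (Finset.abs_sum_le_sum_abs _ _).trans ?_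
    rw [hS1, Finset.mul_sum]
    refine Finset.sum_le_sum fun k _ => ?_
    have hargs : |2 * Real.pi * k * (t + δ) / N - 2 * Real.pi * k * t / N|
        ≤ 2 * Real.pi / N * k := by
      have : 2 * Real.pi * k * (t + δ) / N - 2 * Real.pi * k * t / N
          = 2 * Real.pi * k * δ / N := by ring
      rw [this, abs_of_nonneg (by positivity)]
      calc 2 * Real.pi * k * δ / N ≤ 2 * Real.pi * k * 1 / N := by
            gcongr
        _ = 2 * Real.pi / N * k := by ring
    calc |xa k * (Real.cos (2 * Real.pi * k * (t + δ) / N)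
            - Real.cos (2 * Real.pi * k * t / N))
          + xb k * (Real.sin (2 * Real.pi * k * (t + δ) / N)
            - Real.sin (2 * Real.pi * k * t / N))|
        ≤ |xa k| * |Real.cos (2 * Real.pi * k * (t + δ) / N)
            - Real.cos (2 * Real.pi * k * t / N)|
          + |xb k| * |Real.sin (2 * Real.pi * k * (t + δ) / N)
            - Real.sin (2 * Real.pi * k * t / N)| := by
          refine (abs_add_le _ _).trans ?_
          rw [abs_mul, abs_mul]
      _ ≤ |xa k| * (2 * Real.pi / N * k) + |xb k| * (2 * Real.pi / N * k) := by
          gcongr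
          · exact (hcos _ _).trans hargs
          · exact (hsin _ _).trans hargs
      _ = 2 * Real.pi / N * ((k : ℝ) * (|xa k| + |xb k|)) := by ring
  -- bounds on y
  have hyabs : ∀ t : ℝ, |y t| ≤ Lf * S2 := by
    intro t
    rw [hy]
    calc |f (x t)| = |f (x t) - f 0| := by rw [hf0, sub_zero]
      _ ≤ Lf * |x t - 0| := hf _ _
      _ = Lf * |x t| := by rw [sub_zero]
      _ ≤ Lf * S2 := mul_le_mul_of_nonneg_left (hxabs t) hLf
  have hydiff : ∀ t : ℝ, |y (t + δ) - y t| ≤ Lf * (2 * Real.pi / N * S1) := by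
    intro t
    rw [hy, hy]
    exact (hf _ _).trans (mul_le_mul_of_nonneg_left (hxdiff t) hLf)
  -- per-term bound
  set c : ℝ := 2 * Real.pi * Lf / N * (S1 + (m : ℝ) * S2) with hc
  have hpt : ∀ t : ℕ, |Real.cos (2 * Real.pi * m * t / N) * y ((t : ℝ) + δ)
      - Real.cos (2 * Real.pi * m * ((t : ℝ) - δ) / N) * y t| ≤ c := by
    intro t
    have hkey : Real.cos (2 * Real.pi * m * t / N) * y ((t : ℝ) + δ)
        - Real.cos (2 * Real.pi * m * ((t : ℝ) - δ) / N) * y t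
        = Real.cos (2 * Real.pi * m * t / N) * (y ((t : ℝ) + δ) - y t)
          + (Real.cos (2 * Real.pi * m * t / N)
            - Real.cos (2 * Real.pi * m * ((t : ℝ) - δ) / N)) * y t := by ring
    have hargs : |2 * Real.pi * m * t / N - 2 * Real.pi * m * ((t : ℝ) - δ) / N|
        ≤ 2 * Real.pi * m / N := by
      have : 2 * Real.pi * m * t / N - 2 * Real.pi * m * ((t : ℝ) - δ) / N
          = 2 * Real.pi * m * δ / N := by ring
      rw [this, abs_of_nonneg (by positivity)]
      calc 2 * Real.pi * ↑m * δ / N ≤ 2 * Real.pi * ↑m * 1 / N := by gcongr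
        _ = 2 * Real.pi * ↑m / N := by ring
    rw [hkey]
    calc |Real.cos (2 * Real.pi * m * t / N) * (y ((t : ℝ) + δ) - y t)
          + (Real.cos (2 * Real.pi * m * t / N)
            - Real.cos (2 * Real.pi * m * ((t : ℝ) - δ) / N)) * y t|
        ≤ |Real.cos (2 * Real.pi * m * t / N)| * |y ((t : ℝ) + δ) - y t|
          + |Real.cos (2 * Real.pi * m * t / N)
            - Real.cos (2 * Real.pi * m * ((t : ℝ) - δ) / N)| * |y t| := by
          refine (abs_add_le _ _).trans ?_
          rw [abs_mul, abs_mul]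
      _ ≤ 1 * (Lf * (2 * Real.pi / N * S1))
          + (2 * Real.pi * m / N) * (Lf * S2) := by
          gcongr
          · exact Real.abs_cos_le_one _
          · exact hydiff t
          · exact (hcos _ _).trans hargs
          · exact hyabs t
      _ = c := by rw [hc]; field_simp
  -- assemble
  have hsum : |∑ t ∈ Finset.range N,
      (Real.cos (2 * Real.pi * m * t / N) * y ((t : ℝ) + δ)
        - Real.cos (2 * Real.pi * m * ((t : ℝ) - δ) / N) * y t)| ≤ N * c := by
    refine (Finset.abs_sum_le_sum_abs _ _).trans ?_
    calc ∑ t ∈ Finset.range N, |Real.cos (2 * Real.pi * m * t / N) * y ((t : ℝ) + δ)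
          - Real.cos (2 * Real.pi * m * ((t : ℝ) - δ) / N) * y t|
        ≤ ∑ _t ∈ Finset.range N, c := Finset.sum_le_sum fun t _ => hpt t
      _ = N * c := by rw [Finset.sum_const, Finset.card_range, nsmul_eq_mul]
  calc |(2 / (N : ℝ)) * (∑ t ∈ Finset.range N,
          Real.cos (2 * Real.pi * m * t / N) * y ((t : ℝ) + δ))
        - (2 / (N : ℝ)) * (∑ t ∈ Finset.range N,
          Real.cos (2 * Real.pi * m * ((t : ℝ) - δ) / N) * y t)|
      = (2 / (N : ℝ)) * |∑ t ∈ Finset.range N,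
          (Real.cos (2 * Real.pi * m * t / N) * y ((t : ℝ) + δ)
            - Real.cos (2 * Real.pi * m * ((t : ℝ) - δ) / N) * y t)| := by
        rw [← mul_sub, ← Finset.sum_sub_distrib, abs_mul,
          abs_of_nonneg (by positivity : (0:ℝ) ≤ 2 / (N : ℝ))]
    _ ≤ (2 / (N : ℝ)) * (N * c) := by gcongr
    _ = (4 * Real.pi * Lf / N) * (S1 + (m : ℝ) * S2) := by
        rw [hc]; field_simp; ring
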